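/- Let σ be a play-measure of weight w such that for all x < w there is a finitely founded (well-founded and finitely branching) play-measure τ ≤ σ of weight at least x. Then σ is victorious. -/

import Mathlib

open scoped ENNReal Classical

/-- Active-ending plays over signature `(K, ar)`: alternating sequences of
outputs `k : K` and inputs `i : ar k`. -/
inductive APlay (K : Type) (ar : K → Type) : Type
  | nil : APlay K ar
  | cons (k : K) (i : ar k) (s : APlay K ar) : APlay K ar

variable {K : Type} {ar : K → Type}

/-- Append an output-input pair at the end of an active-ending play. -/
def APlay.snoc : APlay K ar → (k : K) → ar k → APlay K ar
  | .nil, k, i => .cons k i .nil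
  | .cons l j s, k, i => .cons l j (s.snoc k i)

/-- The number of output-input cycles in an active-ending play. -/
def APlay.len : APlay K ar → ℕ
  | .nil => 0
  | .cons _ _ s => s.len + 1

/-- A play-measure: values in `[0,1]` on passive-ending plays (an active play
followed by an output), with `σ_act t = ∑_k σ_pass (t.k)` and
`σ_act (s.k.i) = σ_pass (s.k)`. -/
structure PlayMeasure (K : Type) (ar : K → Type) where
  pass : APlay K ar → K → ℝ≥0∞
  le_one : ∀ t, (∑' k, pass t k) ≤ 1
  consistent : ∀ s k (i : ar k), pass s k = ∑' l, pass (s.snoc k i) l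

/-- The value of a play-measure on an active-ending play. -/
noncomputable def PlayMeasure.act (σ : PlayMeasure K ar) (t : APlay K ar) : ℝ≥0∞ :=
  ∑' k, σ.pass t k

/-- The weight of a play-measure. -/
noncomputable def PlayMeasure.weight (σ : PlayMeasure K ar) : ℝ≥0∞ := σ.act .nil

/-- A partial counterstrategy, given by its set of active-ending plays. -/
structure Counterstrategy (K : Type) (ar : K → Type) where
  act : Set (APlay K ar)
  nil_mem : APlay.nil ∈ act
  prefix_closed : ∀ (s : APlay K ar) (k : K) (i : ar k), s.snoc k i ∈ act → s ∈ act
  deterministic : ∀ (s : APlay K ar) (k : K) (i j : ar k),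
      s.snoc k i ∈ act → s.snoc k j ∈ act → i = j

/-- The passive-ending play `s.k` is a `ρ`-failure: it is in `ρ_pass`
and has no prescribed input. -/
def Counterstrategy.Fails (ρ : Counterstrategy K ar) (s : APlay K ar) (k : K) : Prop :=
  s ∈ ρ.act ∧ ∀ i : ar k, s.snoc k i ∉ ρ.act

/-- `P^m_ρ(σ)`: the sum of `σ_act` over the length-`m` plays in `ρ_act`. -/
noncomputable def contProb (ρ : Counterstrategy K ar) (σ : PlayMeasure K ar) (m : ℕ) : ℝ≥0∞ :=
  ∑' s : {s : APlay K ar // s ∈ ρ.act ∧ s.len = m}, σ.act s.1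

/-- The sum of `σ_pass` over the `ρ`-failures of length `m`. -/
noncomputable def failProb (ρ : Counterstrategy K ar) (σ : PlayMeasure K ar) (m : ℕ) : ℝ≥0∞ :=
  ∑' p : {p : APlay K ar × K // ρ.Fails p.1 p.2 ∧ p.1.len = m}, σ.pass p.1.1 p.1.2

/-- A play-measure is victorious when against every partial counterstrategy,
the probability of play continuing forever is zero. -/
def Victorious (σ : PlayMeasure K ar) : Prop :=
  ∀ ρ : Counterstrategy K ar, (⨅ m, contProb ρ σ m) = 0

/-- The length-`n` prefix of an infinite play. -/
def prefixPlay (f : ℕ → Σ k : K, ar k) : ℕ → APlay K ar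
  | 0 => .nil
  | n + 1 => (prefixPlay f n).snoc (f n).1 (f n).2

/-- A play-measure is well-founded when no infinite play has all its
prefixes in the support. -/
def PlayMeasure.WellFoundedPM (σ : PlayMeasure K ar) : Prop :=
  ¬ ∃ f : ℕ → Σ k : K, ar k, ∀ n, 0 < σ.pass (prefixPlay f n) (f n).1

/-- A play-measure is finitely branching when each active-ending play has
finitely many possible next outputs in the support. -/
def PlayMeasure.FinBranch (σ : PlayMeasure K ar) : Prop :=
  ∀ t : APlay K ar, {k : K | 0 < σ.pass t k}.Finite

/-- Finitely founded: well-founded and finitely branching. -/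
def PlayMeasure.FinFounded (σ : PlayMeasure K ar) : Prop :=
  σ.WellFoundedPM ∧ σ.FinBranch

/-- `f` is uniformly below `g`: there is `d > 0` with `f s + d ≤ g s` on
every passive-ending play `s` in the support of `f`. -/
def UBelow (f g : APlay K ar → K → ℝ≥0∞) : Prop :=
  ∃ d : ℝ≥0∞, 0 < d ∧ ∀ s k, 0 < f s k → f s k + d ≤ g s k

namespace StmtAux

variable {K : Type} {ar : K → Type}

lemma len_snoc (s : APlay K ar) (k : K) (i : ar k) : (s.snoc k i).len = s.len + 1 := by
  induction s with
  | nil => rfl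
  | cons l j s ih => simp [APlay.snoc, APlay.len, ih]

/-- unsnoc -/
def unsnoc : APlay K ar → Option (APlay K ar × Σ k : K, ar k)
  | .nil => none
  | .cons k i s =>
    match unsnoc s with
    | none => some (.nil, ⟨k, i⟩)
    | some (s', p) => some (.cons k i s', p)

lemma unsnoc_snoc (s : APlay K ar) (k : K) (i : ar k) :
    unsnoc (s.snoc k i) = some (s, ⟨k, i⟩) := by
  induction s with
  | nil => rfl
  | cons l j s ih => simp [APlay.snoc, unsnoc, ih]

lemma snoc_inj {s t : APlay K ar} {k l : K} {i : ar k} {j : ar l}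
    (h : s.snoc k i = t.snoc l j) : s = t ∧ (⟨k, i⟩ : Σ k, ar k) = ⟨l, j⟩ := by
  have := unsnoc_snoc s k i
  rw [h, unsnoc_snoc] at this
  have h2 := Option.some_injective _ this
  exact ⟨(congrArg Prod.fst h2).symm, (congrArg Prod.snd h2).symm⟩

lemma exists_snoc {s : APlay K ar} (h : s ≠ .nil) :
    ∃ (t : APlay K ar) (k : K) (i : ar k), s = t.snoc k i := by
  induction s with
  | nil => exact absurd rfl h
  | cons k i s ih =>
    cases s with
    | nil => exact ⟨.nil, k, i, rfl⟩
    | cons l j s' =>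
      obtain ⟨t, k', i', ht⟩ := ih (by simp)
      exact ⟨.cons k i t, k', i', by simp [APlay.snoc, ht]⟩

lemma len_eq_zero {s : APlay K ar} (h : s.len = 0) : s = .nil := by
  cases s with
  | nil => rfl
  | cons k i s => simp [APlay.len] at h

end StmtAux
namespace StmtAux
variable {K : Type} {ar : K → Type}

/-- Plays to lists -/
def toL : APlay K ar → List (Σ k : K, ar k)
  | .nil => []
  | .cons k i s => ⟨k, i⟩ :: toL s

def ofL : List (Σ k : K, ar k) → APlay K ar
  | [] => .nil
  | x :: l => .cons x.1 x.2 (ofL l)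

@[simp] lemma ofL_toL (s : APlay K ar) : ofL (toL s) = s := by
  induction s with
  | nil => rfl
  | cons k i s ih => simp [toL, ofL, ih]

@[simp] lemma toL_ofL (l : List (Σ k : K, ar k)) : toL (ofL l) = l := by
  induction l with
  | nil => rfl
  | cons x l ih => simp [toL, ofL, ih]

lemma ofL_concat (l : List (Σ k : K, ar k)) (x : Σ k : K, ar k) :
    ofL (l ++ [x]) = (ofL l).snoc x.1 x.2 := by
  induction l with
  | nil => rfl
  | cons y l ih => simp [ofL, APlay.snoc, ih]

lemma len_ofL (l : List (Σ k : K, ar k)) : (ofL l).len = l.length := by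
  induction l with
  | nil => rfl
  | cons x l ih => simp [ofL, APlay.len, ih]

section Konig
variable (ρ : Counterstrategy K ar) (τ : PlayMeasure K ar)

/-- Lists whose play is in the counterstrategy with positive measure along every step. -/
def Good (l : List (Σ k : K, ar k)) : Prop :=
  ofL l ∈ ρ.act ∧ ∀ (i : ℕ) (h : i < l.length), 0 < τ.pass (ofL (l.take i)) (l.get ⟨i, h⟩).1

lemma good_take {l : List (Σ k : K, ar k)} (hl : Good ρ τ l) (n : ℕ) :
    Good ρ τ (l.take n) := by
  constructor
  · -- membership in ρ.act of prefixes
    have main : ∀ (l : List (Σ k : K, ar k)), ofL l ∈ ρ.act → ∀ n, ofL (l.take n) ∈ ρ.act := by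
      intro l
      induction l using List.reverseRecOn with
      | nil => intro h n; simpa using h
      | append_singleton l x ih =>
        intro h n
        have hmem : ofL l ∈ ρ.act := by
          rw [ofL_concat] at h
          exact ρ.prefix_closed _ _ _ h
        rcases le_or_gt (l.length + 1) n with hn | hn
        · rwa [List.take_of_length_le (by simpa using hn)]
        · rcases le_or_gt (l.length) n with hn' | hn'
          · have : n = l.length := le_antisymm (by omega) hn'
            subst this
            rw [List.take_left]
            exact hmem
          · rw [List.take_append_of_le_length (le_of_lt hn')]
            exact ih hmem n
    exact main l hl.1 n
  · intro i h
    have hi : i < l.length := by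
      have := h; rw [List.length_take] at this; omega
    have := hl.2 i hi
    have hin : i ≤ n := by
      have h' := h; rw [List.length_take] at h'; omega
    have ht : (l.take n).take i = l.take i := by
      rw [List.take_take, min_eq_left hin]
    have hg : (l.take n).get ⟨i, h⟩ = l.get ⟨i, hi⟩ := by
      simp [List.getElem_take]
    rw [ht, hg]
    exact this

/-- Step relation: one extension. -/
def GStep (t s : {l : List (Σ k : K, ar k) // Good ρ τ l}) : Prop :=
  ∃ x, t.1 = s.1 ++ [x]

lemma gstep_wf (hwf : τ.WellFoundedPM) : WellFounded (GStep ρ τ) := by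
  constructor
  intro a
  by_contra hacc
  have hch : ∀ b : {b // ¬ Acc (GStep ρ τ) b}, ∃ c : {b // ¬ Acc (GStep ρ τ) b}, GStep ρ τ c.1 b.1 := by
    rintro ⟨b, hb⟩
    by_contra hc
    push_neg at hc
    exact hb (Acc.intro b fun c hcb => not_not.1 fun hn => hc ⟨c, hn⟩ hcb)
  choose F hF using hch
  set f : ℕ → {l : List (Σ k : K, ar k) // Good ρ τ l} :=
    fun n => ((F^[n] ⟨a, hacc⟩ : {b // ¬ Acc (GStep ρ τ) b})).1 with hf
  have hstep : ∀ n, GStep ρ τ (f (n + 1)) (f n) := by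
    intro n
    have : F^[n+1] ⟨a, hacc⟩ = F (F^[n] ⟨a, hacc⟩) := Function.iterate_succ_apply' F n _
    simpa [hf, this] using hF (F^[n] ⟨a, hacc⟩)
  -- lengths
  have hlen : ∀ n, (f n).1.length = (f 0).1.length + n := by
    intro n
    induction n with
    | zero => rfl
    | succ n ih =>
      obtain ⟨x, hx⟩ := hstep n
      rw [hx]; simp [ih]; omega
  -- prefix chain
  have hpre : ∀ n, (f n).1 <+: (f (n + 1)).1 := by
    intro n
    obtain ⟨x, hx⟩ := hstep n
    rw [hx]; exact ⟨[x], rfl⟩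
  have hpre' : ∀ m n, m ≤ n → (f m).1 <+: (f n).1 := by
    intro m n h
    induction n with
    | zero => cases Nat.le_zero.1 h; exact List.prefix_refl _
    | succ n ih =>
      rcases Nat.lt_or_ge m (n+1) with h' | h'
      · exact (ih (by omega)).trans (hpre n)
      · have : m = n + 1 := by omega
        subst this; exact List.prefix_refl _
  set L := (f 0).1.length with hL
  have hlt : ∀ n, n < (f (n+1)).1.length := by
    intro n; rw [hlen]; omega
  -- the infinite branch
  set g : ℕ → Σ k : K, ar k := fun n => (f (n+1)).1.get ⟨n, hlt n⟩ with hg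
  -- prefixes
  have key : ∀ n, toL (prefixPlay g n) = (f n).1.take n := by
    intro n
    induction n with
    | zero => rfl
    | succ n ih =>
      have h1 : (f (n+1)).1.take n = (f n).1.take n := by
        obtain ⟨x, hx⟩ := hstep n
        rw [hx, List.take_append_of_le_length]
        rw [hlen]; omega
      have h2 : (f (n+1)).1.take (n+1) = (f (n+1)).1.take n ++ [g n] := by
        rw [List.take_succ]
        congr 1
        rw [List.getElem?_eq_getElem (hlt n)]
        rfl
      show toL ((prefixPlay g n).snoc (g n).1 (g n).2) = _
      rw [h2, h1, ← ih]
      have := congrArg toL (ofL_concat (toL (prefixPlay g n)) (g n))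
      simpa using this.symm
  apply hwf
  refine ⟨g, fun n => ?_⟩
  have hgood := (f (n+1)).2.2 n (hlt n)
  have : prefixPlay g n = ofL ((f (n+1)).1.take n) := by
    have h1 : (f (n+1)).1.take n = (f n).1.take n := by
      obtain ⟨x, hx⟩ := hstep n
      rw [hx, List.take_append_of_le_length]
      rw [hlen]; omega
    rw [h1, ← key n, ofL_toL]
  rw [this]
  exact hgood

end Konig
end StmtAux
namespace StmtAux
variable {K : Type} {ar : K → Type}

section Konig2
variable (ρ : Counterstrategy K ar) (τ : PlayMeasure K ar)

lemma exists_bound (hτ : τ.FinFounded) :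
    ∃ N, ∀ l : List (Σ k : K, ar k), Good ρ τ l → l.length ≤ N := by
  classical
  have main : ∀ a : {l : List (Σ k : K, ar k) // Good ρ τ l},
      ∃ N, ∀ b : {l : List (Σ k : K, ar k) // Good ρ τ l}, a.1 <+: b.1 → b.1.length ≤ N := by
    intro a
    induction a using (gstep_wf ρ τ hτ.1).induction with
    | _ a ih =>
    set C := {c : {l : List (Σ k : K, ar k) // Good ρ τ l} | GStep ρ τ c a} with hC
    have hx : ∀ c : C, ∃ x, c.1.1 = a.1 ++ [x] := fun c => c.2
    choose X hX using hx
    have hXpos : ∀ c : C, 0 < τ.pass (ofL a.1) (X c).1 := by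
      intro c
      have hlt : a.1.length < c.1.1.length := by rw [hX c]; simp
      have hp := c.1.2.2 a.1.length hlt
      have h1 : c.1.1.take a.1.length = a.1 := by rw [hX c, List.take_left]
      have h2 : c.1.1.get ⟨a.1.length, hlt⟩ = X c := by
        rw [List.get_of_eq (hX c)]
        simp
      rw [h1, h2] at hp
      exact hp
    have hmem : ∀ c : C, (ofL a.1).snoc (X c).1 (X c).2 ∈ ρ.act := by
      intro c
      have := c.1.2.1
      rw [hX c, ofL_concat] at this
      exact this
    have hXinj : Function.Injective (fun c : C => (X c).1) := by
      intro c1 c2 hk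
      have m1 := hmem c1
      have m2 := hmem c2
      have hxx : X c1 = X c2 := by
        have hk' : (X c1).1 = (X c2).1 := hk
        rcases hh1 : X c1 with ⟨k1, i1⟩
        rcases hh2 : X c2 with ⟨k2, i2⟩
        rw [hh1] at m1 hk'
        rw [hh2] at m2 hk'
        obtain rfl : k1 = k2 := hk'
        obtain rfl : i1 = i2 := ρ.deterministic _ _ _ _ m1 m2
        rfl
      have hbb : c1.1.1 = c2.1.1 := by rw [hX c1, hX c2, hxx]
      exact Subtype.ext (Subtype.ext hbb)
    haveI : Finite C := by
      haveI : Finite {k // 0 < τ.pass (ofL a.1) k} := (hτ.2 (ofL a.1)).to_subtype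
      exact Finite.of_injective (fun c : C => (⟨(X c).1, hXpos c⟩ : {k // 0 < τ.pass (ofL a.1) k}))
        (fun c1 c2 h => hXinj (congrArg Subtype.val h))
    have hNc : ∀ c : C, ∃ N, ∀ b : {l : List (Σ k : K, ar k) // Good ρ τ l}, c.1.1 <+: b.1 → b.1.length ≤ N := fun c => ih c.1 c.2
    choose Nc hNc using hNc
    obtain ⟨N0, hN0⟩ := (Set.finite_range Nc).bddAbove
    refine ⟨max N0 a.1.length, fun b hab => ?_⟩
    rcases hab with ⟨t, ht⟩
    cases t with
    | nil =>
      have : b.1 = a.1 := by rw [← ht]; simp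
      rw [this]
      exact le_max_right _ _
    | cons x t' =>
      have hgood : Good ρ τ (a.1 ++ [x]) := by
        have hg := good_take ρ τ b.2 (a.1.length + 1)
        rw [← ht] at hg
        rw [List.take_append] at hg
        simpa [List.take_of_length_le] using hg
      have hcC : (⟨a.1 ++ [x], hgood⟩ : {l // Good ρ τ l}) ∈ C := ⟨x, rfl⟩
      have hb : b.1.length ≤ Nc ⟨_, hcC⟩ := by
        refine hNc ⟨_, hcC⟩ b ⟨t', ?_⟩
        rw [← ht]; simp
      exact le_trans hb (le_trans (hN0 ⟨⟨_, hcC⟩, rfl⟩) (le_max_left _ _))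
  obtain ⟨N, hN⟩ := main ⟨[], by
    constructor
    · exact ρ.nil_mem
    · intro i hi; simp at hi⟩
  exact ⟨N, fun l hl => hN ⟨l, hl⟩ (List.nil_prefix)⟩

lemma pos_steps : ∀ l : List (Σ k : K, ar k), 0 < τ.act (ofL l) →
    ∀ (i : ℕ) (h : i < l.length), 0 < τ.pass (ofL (l.take i)) (l.get ⟨i, h⟩).1 := by
  intro l
  induction l using List.reverseRecOn with
  | nil => intro _ i hi; simp at hi
  | append_singleton l x ih =>
    intro hpos i hi
    have hpassx : τ.pass (ofL l) x.1 = τ.act (ofL (l ++ [x])) := by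
      rw [ofL_concat]
      exact τ.consistent (ofL l) x.1 x.2
    have hpx : 0 < τ.pass (ofL l) x.1 := by rw [hpassx]; exact hpos
    rcases Nat.lt_or_ge i l.length with h' | h'
    · have hip := ih (lt_of_lt_of_le hpx (ENNReal.le_tsum x.1)) i h'
      have ht : (l ++ [x]).take i = l.take i := List.take_append_of_le_length (le_of_lt h')
      have hg : (l ++ [x]).get ⟨i, hi⟩ = l.get ⟨i, h'⟩ := by
        simp [List.getElem_append_left, h']
      rw [ht, hg]
      exact hip
    · have : i = l.length := by simp at hi; omega
      subst this
      have ht : (l ++ [x]).take l.length = l := List.take_left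
      have hg : (l ++ [x]).get ⟨l.length, hi⟩ = x := by simp
      rw [ht, hg]
      exact hpx

lemma contProb_eventually_zero (hτ : τ.FinFounded) : ∃ n, contProb ρ τ n = 0 := by
  obtain ⟨N, hN⟩ := exists_bound ρ τ hτ
  refine ⟨N + 1, ENNReal.tsum_eq_zero.2 ?_⟩
  rintro ⟨s, hs, hlen⟩
  by_contra hne
  have hpos : 0 < τ.act s := pos_iff_ne_zero.2 hne
  have hgood : Good ρ τ (toL s) := by
    constructor
    · rw [ofL_toL]; exact hs
    · intro i hi
      exact pos_steps τ (toL s) (by rw [ofL_toL]; exact hpos) i hi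
  have hlen2 : (toL s).length = N + 1 := by
    rw [← hlen, ← len_ofL (toL s), ofL_toL]
  have := hN (toL s) hgood
  omega

end Konig2
end StmtAux
namespace StmtAux
variable {K : Type} {ar : K → Type}

lemma contProb_zero (ρ : Counterstrategy K ar) (σ : PlayMeasure K ar) :
    contProb ρ σ 0 = σ.weight := by
  have h := tsum_eq_single (L := SummationFilter.unconditional _) (f := fun s : {s : APlay K ar // s ∈ ρ.act ∧ s.len = 0} => σ.act s.1)
    ⟨.nil, ρ.nil_mem, rfl⟩ ?_
  · exact h
  · rintro ⟨b, hb, hb0⟩ hne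
    exact absurd (Subtype.ext (len_eq_zero hb0)) hne

lemma contProb_succ (ρ : Counterstrategy K ar) (σ : PlayMeasure K ar) (m : ℕ) :
    contProb ρ σ m = failProb ρ σ m + contProb ρ σ (m + 1) := by
  classical
  set A := {s : APlay K ar // s ∈ ρ.act ∧ s.len = m} with hA
  have h1 : contProb ρ σ m = ∑' p : A × K, σ.pass p.1.1 p.2 := by
    rw [ENNReal.tsum_prod (f := fun (a : A) (k : K) => σ.pass a.1 k)]
    rfl
  set S : Set (A × K) := {p | ∃ i : ar p.2, (p.1.1).snoc p.2 i ∈ ρ.act} with hS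
  have hsplit : (∑' x : S, σ.pass x.1.1.1 x.1.2) + (∑' x : ↥Sᶜ, σ.pass x.1.1.1 x.1.2)
      = ∑' p : A × K, σ.pass p.1.1 p.2 :=
    Summable.tsum_add_tsum_compl (f := fun p : A × K => σ.pass p.1.1 p.2)
      ENNReal.summable ENNReal.summable
  -- failure part
  have hfail : (∑' x : ↥Sᶜ, σ.pass x.1.1.1 x.1.2) = failProb ρ σ m := by
    let e1 : ↥Sᶜ ≃ {q : APlay K ar × K // ρ.Fails q.1 q.2 ∧ q.1.len = m} :=
      { toFun := fun x => ⟨(x.1.1.1, x.1.2),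
          ⟨⟨x.1.1.2.1, fun i hi => x.2 ⟨i, hi⟩⟩, x.1.1.2.2⟩⟩
        invFun := fun q => ⟨(⟨q.1.1, q.2.1.1, q.2.2⟩, q.1.2),
          fun hex => hex.elim fun i hi => q.2.1.2 i hi⟩
        left_inv := fun x => rfl
        right_inv := fun q => rfl }
    have he := e1.tsum_eq
      (fun q : {q : APlay K ar × K // ρ.Fails q.1 q.2 ∧ q.1.len = m} => σ.pass q.1.1 q.1.2)
    rw [show failProb ρ σ m
        = ∑' q : {q : APlay K ar × K // ρ.Fails q.1 q.2 ∧ q.1.len = m}, σ.pass q.1.1 q.1.2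
      from rfl, ← he]
    exact tsum_congr fun x => rfl
  -- continuation part
  have hcont : (∑' x : S, σ.pass x.1.1.1 x.1.2) = contProb ρ σ (m + 1) := by
    set B := {t : APlay K ar // t ∈ ρ.act ∧ t.len = m + 1} with hB
    have φdef : ∀ x : S, ∃ t : B, t.1 = (x.1.1.1).snoc x.1.2 (Classical.choose x.2) := by
      intro x
      refine ⟨⟨(x.1.1.1).snoc x.1.2 (Classical.choose x.2), Classical.choose_spec x.2, ?_⟩, rfl⟩
      rw [len_snoc, x.1.1.2.2]
    choose φ hφ using φdef
    have hbij : Function.Bijective φ := by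
      constructor
      · intro x1 x2 hx
        have he : (x1.1.1.1).snoc x1.1.2 (Classical.choose x1.2)
            = (x2.1.1.1).snoc x2.1.2 (Classical.choose x2.2) := by
          rw [← hφ x1, ← hφ x2, hx]
        obtain ⟨hs, hki⟩ := snoc_inj he
        have hk : x1.1.2 = x2.1.2 := congrArg Sigma.fst hki
        exact Subtype.ext (Prod.ext (Subtype.ext hs) hk)
      · intro b
        have hne : b.1 ≠ .nil := by
          intro hn
          have := b.2.2
          rw [hn] at this
          simp [APlay.len] at this
        obtain ⟨t, k, i, ht⟩ := exists_snoc hne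
        have hmem : t.snoc k i ∈ ρ.act := ht ▸ b.2.1
        have htl : t.len = m := by
          have := b.2.2
          rw [ht, len_snoc] at this
          omega
        refine ⟨⟨(⟨t, ρ.prefix_closed t k i hmem, htl⟩, k), ⟨i, hmem⟩⟩, ?_⟩
        apply Subtype.ext
        rw [hφ]
        simp only
        rw [ht]
        congr 1
        exact ρ.deterministic t k _ i (Classical.choose_spec (⟨i, hmem⟩ : ∃ j, t.snoc k j ∈ ρ.act)) hmem
    have := (Equiv.ofBijective φ hbij).tsum_eq (fun b : B => σ.act b.1)
    rw [show contProb ρ σ (m+1) = ∑' b : B, σ.act b.1 from rfl, ← this]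
    apply tsum_congr
    intro x
    simp only [Equiv.ofBijective_apply]
    rw [hφ x]
    exact σ.consistent x.1.1.1 x.1.2 (Classical.choose x.2)
  rw [h1, ← hsplit, hfail, hcont, add_comm]

lemma telescope (ρ : Counterstrategy K ar) (σ : PlayMeasure K ar) (n : ℕ) :
    (∑ m ∈ Finset.range n, failProb ρ σ m) + contProb ρ σ n = σ.weight := by
  induction n with
  | zero => simp [contProb_zero]
  | succ n ih =>
    rw [Finset.sum_range_succ, add_assoc, ← contProb_succ, ih]

lemma failProb_mono (ρ : Counterstrategy K ar) {σ τ : PlayMeasure K ar}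
    (hle : ∀ s k, τ.pass s k ≤ σ.pass s k) (m : ℕ) :
    failProb ρ τ m ≤ failProb ρ σ m :=
  Summable.tsum_le_tsum (fun _ => hle _ _) ENNReal.summable ENNReal.summable

end StmtAux

/-- If for every `x < w(σ)` there is a finitely founded play-measure `τ ≤ σ`
of weight at least `x`, then `σ` is victorious. -/
theorem stmt_11 {K : Type} {ar : K → Type} (σ : PlayMeasure K ar)
    (h : ∀ x < σ.weight, ∃ τ : PlayMeasure K ar,
      (∀ s k, τ.pass s k ≤ σ.pass s k) ∧ x ≤ τ.weight ∧ τ.FinFounded) :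
    Victorious σ := by
  intro ρ
  have hwtop : σ.weight ≠ ⊤ := by
    have : σ.weight ≤ 1 := σ.le_one .nil
    exact ne_top_of_le_ne_top ENNReal.one_ne_top this
  have hb : σ.weight ≤ ∑' m, failProb ρ σ m := by
    by_contra hlt
    push_neg at hlt
    obtain ⟨x, hx1, hx2⟩ := exists_between hlt
    obtain ⟨τ, hle, hwx, hff⟩ := h x hx2
    obtain ⟨n, hn⟩ := StmtAux.contProb_eventually_zero ρ τ hff
    have ht := StmtAux.telescope ρ τ n
    rw [hn, add_zero] at ht
    have h2 : ∑ m ∈ Finset.range n, failProb ρ τ m ≤ ∑ m ∈ Finset.range n, failProb ρ σ m :=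
      Finset.sum_le_sum fun m _ => StmtAux.failProb_mono ρ hle m
    have h3 : ∑ m ∈ Finset.range n, failProb ρ σ m ≤ ∑' m, failProb ρ σ m :=
      ENNReal.sum_le_tsum _
    exact absurd (le_trans (ht ▸ hwx) (le_trans h2 h3)) (not_le.2 hx1)
  have hcont : ∀ n, contProb ρ σ n = σ.weight - ∑ m ∈ Finset.range n, failProb ρ σ m := by
    intro n
    have ht := StmtAux.telescope ρ σ n
    have hfin : (∑ m ∈ Finset.range n, failProb ρ σ m) ≠ ⊤ := by
      intro htop
      rw [htop, top_add] at ht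
      exact hwtop ht.symm
    rw [add_comm] at ht
    exact ENNReal.eq_sub_of_add_eq hfin ht
  calc ⨅ n, contProb ρ σ n
      = ⨅ n, (σ.weight - ∑ m ∈ Finset.range n, failProb ρ σ m) := by
        exact iInf_congr hcont
    _ = σ.weight - ⨆ n, ∑ m ∈ Finset.range n, failProb ρ σ m := (ENNReal.sub_iSup hwtop).symm
    _ = σ.weight - ∑' m, failProb ρ σ m := by rw [ENNReal.tsum_eq_iSup_nat]
    _ = 0 := tsub_eq_zero_of_le hb
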